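/- For every real x that is not an integer, π·cot(π·x) = 1/x + 2x·∑_{n=1}^∞ 1/(x² − n²), the series converging for such x. -/

import Mathlib

open Real intervalIntegral in
private lemma cosInt (x : ℝ) (n : ℤ) (hw : (x:ℂ) - (n : ℤ) ≠ 0) (hv : (x:ℂ) + (n : ℤ) ≠ 0) :
    (∫ t in (-π)..(-π + 2*π), Complex.exp (-(n:ℂ) * Complex.I * t) * Complex.cos (x * t))
      = (-1:ℂ)^n * (Real.sin (π*x) : ℂ) * (2*x) / ((x:ℂ)^2 - (n:ℂ)^2) := by
  set I := Complex.I
  have hcos : ∀ z : ℂ, Complex.cos z = (Complex.exp (z*I) + Complex.exp (-z*I))/2 := by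
    intro z
    rw [show -z*I = (-z)*I by ring, Complex.exp_mul_I, Complex.exp_mul_I, Complex.cos_neg,
      Complex.sin_neg]
    ring
  have expdiff : ∀ r : ℝ, Complex.exp ((r:ℂ) * I) - Complex.exp (-(r:ℂ) * I)
      = 2 * (Real.sin r : ℂ) * I := by
    intro r
    rw [Complex.exp_mul_I, Complex.exp_mul_I, Complex.cos_neg, Complex.sin_neg,
      ← Complex.ofReal_sin]
    ring
  have key : ∀ t : ℝ, Complex.exp (-(n:ℂ) * I * t) * Complex.cos (x * t)
      = (Complex.exp ((I*((x:ℂ)-n)) * t) + Complex.exp ((-I*((x:ℂ)+n)) * t)) / 2 := by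
    intro t
    have e1 : (I*((x:ℂ)-n))*t = (-(n:ℂ)*I*t) + ((x:ℂ)*t)*I := by ring
    have e2 : (-I*((x:ℂ)+n))*t = (-(n:ℂ)*I*t) + (-((x:ℂ)*t))*I := by ring
    rw [hcos ((x:ℂ)*t), e1, e2, Complex.exp_add, Complex.exp_add,
      show (-((x:ℂ)*t))*I = -((x:ℂ)*t*I) by ring]
    ring
  rw [intervalIntegral.integral_congr (fun t _ => key t)]
  have ha : I*((x:ℂ)-n) ≠ 0 := mul_ne_zero Complex.I_ne_zero hw
  have hb : -I*((x:ℂ)+n) ≠ 0 := mul_ne_zero (neg_ne_zero.mpr Complex.I_ne_zero) hv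
  have ia : IntervalIntegrable (fun t : ℝ => Complex.exp ((I*((x:ℂ)-n)) * t))
      MeasureTheory.volume (-π) (-π + 2*π) := by
    apply Continuous.intervalIntegrable; fun_prop
  have ib : IntervalIntegrable (fun t : ℝ => Complex.exp ((-I*((x:ℂ)+n)) * t))
      MeasureTheory.volume (-π) (-π + 2*π) := by
    apply Continuous.intervalIntegrable; fun_prop
  rw [intervalIntegral.integral_div, intervalIntegral.integral_add ia ib,
    integral_exp_mul_complex ha, integral_exp_mul_complex hb]
  have hπ : ((-π + 2*π : ℝ) : ℂ) = ((π:ℝ):ℂ) := by push_cast; ring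
  rw [hπ]
  have e1 : (I*((x:ℂ)-n)) * ((π:ℝ):ℂ) = (((x - n)*π : ℝ):ℂ) * I := by push_cast; ring
  have e2 : (I*((x:ℂ)-n)) * ((-π:ℝ):ℂ) = -(((x - n)*π : ℝ):ℂ) * I := by push_cast; ring
  have e3 : (-I*((x:ℂ)+n)) * ((π:ℝ):ℂ) = -(((x + n)*π : ℝ):ℂ) * I := by push_cast; ring
  have e4 : (-I*((x:ℂ)+n)) * ((-π:ℝ):ℂ) = (((x + n)*π : ℝ):ℂ) * I := by push_cast; ring
  rw [e1, e2, e3, e4]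
  have d1 := expdiff ((x - n)*π)
  have d2 := expdiff ((x + n)*π)
  have s1 : Real.sin ((x - (n:ℝ))*π) = (-1:ℝ)^n * Real.sin (π*x) := by
    rw [show (x - (n:ℝ))*π = x*π + (-n : ℤ)*π by push_cast; ring, Real.sin_add_int_mul_pi,
      zpow_neg, ← inv_zpow, inv_neg, inv_one, mul_comm x π]
  have s2 : Real.sin ((x + (n:ℝ))*π) = (-1:ℝ)^n * Real.sin (π*x) := by
    rw [show (x + (n:ℝ))*π = x*π + (n : ℤ)*π by push_cast; ring, Real.sin_add_int_mul_pi,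
      mul_comm x π]
  rw [show Complex.exp (-(((x + n)*π : ℝ):ℂ) * I) - Complex.exp ((((x + n)*π : ℝ):ℂ) * I)
        = -(Complex.exp ((((x + n)*π : ℝ):ℂ) * I) - Complex.exp (-(((x + n)*π : ℝ):ℂ) * I))
      by ring, d1, d2, s1, s2]
  have hd : (x:ℂ)^2 - (n:ℂ)^2 ≠ 0 := by
    rw [show (x:ℂ)^2 - (n:ℂ)^2 = ((x:ℂ)-n)*((x:ℂ)+n) by ring]; exact mul_ne_zero hw hv
  have mdl : ∀ c w : ℂ, 2*c*Complex.I/(Complex.I*w) = 2*c/w := fun c w => by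
    rw [show 2*c*Complex.I = Complex.I*(2*c) by ring, mul_div_mul_left _ _ Complex.I_ne_zero]
  have mdl2 : ∀ c w : ℂ, -(2*c*Complex.I)/(-Complex.I*w) = 2*c/w := fun c w => by
    rw [show -(2*c*Complex.I) = -Complex.I*(2*c) by ring,
      mul_div_mul_left _ _ (neg_ne_zero.mpr Complex.I_ne_zero)]
  rw [mdl, mdl2]
  push_cast
  field_simp
  ring

open Real in
private lemma coeff_eq (x : ℝ) (n : ℤ) (hw : (x:ℂ) - (n : ℤ) ≠ 0) (hv : (x:ℂ) + (n : ℤ) ≠ 0) :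
    fourierCoeffOn (by linarith [Real.pi_pos] : -π < -π + 2*π) (fun t => Complex.cos (x * t)) n
      = (-1:ℂ)^n * ((x * Real.sin (π*x) / (π * (x^2 - (n:ℝ)^2)) : ℝ) : ℂ) := by
  have hπ : (0:ℝ) < π := Real.pi_pos
  rw [fourierCoeffOn_eq_integral]
  simp only [fourier_coe_apply, smul_eq_mul]
  have key : ∀ t : ℝ, t ∈ Set.uIcc (-π) (-π + 2*π) →
      Complex.exp (2 * (π:ℝ) * Complex.I * (-n : ℤ) * t / ((-π + 2*π) - (-π) : ℝ))
        * Complex.cos (x * t)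
      = Complex.exp (-(n:ℂ) * Complex.I * t) * Complex.cos (x * t) := by
    intro t _
    congr 2
    rw [show ((-π + 2*π) - (-π) : ℝ) = 2*π by ring]
    push_cast
    rw [div_eq_iff (by simp [Real.pi_ne_zero] : 2*(π:ℂ) ≠ 0)]
    ring
  rw [intervalIntegral.integral_congr key, cosInt x n hw hv, Complex.real_smul]
  have hd : (x:ℂ)^2 - (n:ℂ)^2 ≠ 0 := by
    rw [show (x:ℂ)^2 - (n:ℂ)^2 = ((x:ℂ)-n)*((x:ℂ)+n) by ring]; exact mul_ne_zero hw hv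
  have hden : ((-π + 2*π) - (-π) : ℝ) = 2*π := by ring
  rw [hden]
  push_cast
  field_simp

set_option maxHeartbeats 1000000 in
open Real in
private lemma key_hasSum (x S2 : ℝ) (hZ : HasSum (fun i : ℤ => 1 / (x^2 - (i:ℝ)^2)) S2)
    (hw : ∀ n : ℤ, (x:ℂ) - (n : ℤ) ≠ 0) (hv : ∀ n : ℤ, (x:ℂ) + (n : ℤ) ≠ 0) :
    HasSum (fun i : ℤ => ((x * Real.sin (π*x) / (π * (x^2 - (i:ℝ)^2)) : ℝ) : ℂ))
      ((Real.cos (π*x) : ℝ) : ℂ) := by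
  have hπ : (0:ℝ) < π := Real.pi_pos
  haveI : Fact (0 < 2*π) := ⟨by positivity⟩
  set f0 : ℝ → ℂ := fun t => Complex.cos (x * t) with hf0
  have hend : f0 (-π) = f0 (-π + 2*π) := by
    simp only [hf0]
    rw [show (x:ℂ)*((-π:ℝ):ℂ) = -((x:ℂ)*((-π+2*π:ℝ):ℂ)) by push_cast; ring, Complex.cos_neg]
  have hcont : Continuous (AddCircle.liftIco (2*π) (-π) f0) := by
    refine AddCircle.liftIco_continuous hend ?_
    fun_prop
  set F : C(AddCircle (2*π), ℂ) := ⟨_, hcont⟩ with hF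
  have hcoef : ∀ i : ℤ, fourierCoeff (⇑F) i
      = (-1:ℂ)^i * ((x * Real.sin (π*x) / (π * (x^2 - (i:ℝ)^2)) : ℝ) : ℂ) := by
    intro i
    have : fourierCoeff (⇑F) i = fourierCoeffOn (by linarith : -π < -π + 2*π) f0 i :=
      fourierCoeff_liftIco_eq f0 i
    rw [this, coeff_eq x i (hw i) (hv i)]
  have hsummable : Summable (fourierCoeff (⇑F)) := by
    refine Summable.of_norm ?_
    have hs : Summable (fun i : ℤ => |x * Real.sin (π*x) / π| * |1 / (x^2 - (i:ℝ)^2)|) :=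
      (hZ.summable.abs).mul_left _
    refine hs.congr fun i => ?_
    rw [hcoef i, norm_mul, norm_zpow, norm_neg, norm_one, one_zpow, one_mul, Complex.norm_real,
      Real.norm_eq_abs, ← abs_mul, mul_one_div, div_div]
  have hpt := has_pointwise_sum_fourier_series_of_summable hsummable
    (((-π : ℝ) : AddCircle (2*π)))
  have hFval : F (((-π : ℝ) : AddCircle (2*π))) = ((Real.cos (π*x) : ℝ) : ℂ) := by
    have hmem : (-π) ∈ Set.Ico (-π) (-π + 2*π) := ⟨le_refl _, by linarith⟩
    have : F (((-π : ℝ) : AddCircle (2*π))) = f0 (-π) := by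
      show AddCircle.liftIco (2*π) (-π) f0 ↑(-π) = f0 (-π)
      exact AddCircle.liftIco_coe_apply hmem
    rw [this]
    show Complex.cos ((x:ℂ)*((-π:ℝ):ℂ)) = ((Real.cos (π*x) : ℝ) : ℂ)
    rw [show (x:ℂ)*((-π:ℝ):ℂ) = ((-(π*x) : ℝ) : ℂ) by push_cast; ring, ← Complex.ofReal_cos,
      Real.cos_neg]
  have hfour : ∀ i : ℤ, fourier i (((-π : ℝ) : AddCircle (2*π))) = (-1:ℂ)^i := by
    intro i
    rw [fourier_coe_apply]
    rw [show 2*(π:ℂ)*Complex.I*(i:ℂ)*((-π:ℝ):ℂ)/((2*π : ℝ):ℂ)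
        = ((-i : ℤ):ℂ) * ((π:ℝ) * Complex.I) by
      push_cast
      rw [div_eq_iff (by simp [Real.pi_ne_zero] : 2*(π:ℂ) ≠ 0)]
      ring]
    rw [Complex.exp_int_mul, Complex.exp_pi_mul_I, zpow_neg, ← inv_zpow, inv_neg, inv_one]
  have hterm : ∀ i : ℤ, fourierCoeff (⇑F) i • fourier i (((-π : ℝ) : AddCircle (2*π)))
      = ((x * Real.sin (π*x) / (π * (x^2 - (i:ℝ)^2)) : ℝ) : ℂ) := by
    intro i
    rw [smul_eq_mul, hcoef i, hfour i,
      show ((-1:ℂ)^i * ((x * Real.sin (π*x) / (π * (x^2 - (i:ℝ)^2)) : ℝ) : ℂ)) * (-1:ℂ)^i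
        = ((-1:ℂ)^i * (-1:ℂ)^i) * ((x * Real.sin (π*x) / (π * (x^2 - (i:ℝ)^2)) : ℝ) : ℂ) by ring,
      ← mul_zpow]
    norm_num
  rw [hFval] at hpt
  exact (funext hterm : _) ▸ hpt

set_option maxHeartbeats 1000000 in
/-- For every real `x` that is not an integer,
`π·cot(π·x) = 1/x + 2x·∑_{n=1}^∞ 1/(x² − n²)`, the series converging. -/
theorem pi_cot_eq (x : ℝ) (hx : ∀ m : ℤ, x ≠ m) :
    ∃ S : ℝ, HasSum (fun n : ℕ => 1 / (x ^ 2 - ((n : ℝ) + 1) ^ 2)) S ∧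
      Real.pi * Real.cot (Real.pi * x) = 1 / x + 2 * x * S := by
  have hπ : (0:ℝ) < Real.pi := Real.pi_pos
  have hx0 : x ≠ 0 := fun h => hx 0 (by simp [h])
  have hsin : Real.sin (Real.pi * x) ≠ 0 := by
    intro h
    obtain ⟨m, hm⟩ := Real.sin_eq_zero_iff.mp h
    refine hx m ?_
    have := mul_left_cancel₀ (ne_of_gt hπ) (by linarith [hm] : Real.pi * x = Real.pi * m)
    exact this
  have hw : ∀ n : ℤ, (x:ℂ) - (n : ℤ) ≠ 0 := by
    intro n h
    exact hx n (by exact_mod_cast sub_eq_zero.mp h)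
  have hv : ∀ n : ℤ, (x:ℂ) + (n : ℤ) ≠ 0 := by
    intro n h
    refine hx (-n) ?_
    have : (x:ℂ) = ((-n : ℤ) : ℂ) := by push_cast; linear_combination h
    exact_mod_cast this
  -- summability of the series
  have hsum : Summable (fun k : ℕ => 1 / (x ^ 2 - ((k : ℝ) + 1) ^ 2)) := by
    have hbase : Summable (fun k : ℕ => 2 * (1 / ((k:ℝ)+1)^2)) := by
      refine Summable.mul_left 2 ?_
      have h0 : Summable (fun k : ℕ => 1 / ((k:ℕ):ℝ)^2) := by
        exact_mod_cast Real.summable_one_div_nat_pow.mpr (by norm_num)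
      have := (summable_nat_add_iff (f := fun k : ℕ => 1 / ((k:ℕ):ℝ)^2) 1).mpr h0
      exact this.congr fun k => by push_cast; ring
    refine Summable.of_norm_bounded_eventually_nat hbase ?_
    filter_upwards [Filter.eventually_ge_atTop ⌈Real.sqrt 2 * |x|⌉₊] with k hk
    have hk' : Real.sqrt 2 * |x| ≤ (k:ℝ) := by exact_mod_cast Nat.ceil_le.mp hk
    have hk0 : (0:ℝ) ≤ (k:ℝ) := Nat.cast_nonneg k
    have h2 : 2 * x^2 ≤ ((k:ℝ)+1)^2 := by
      have key := mul_le_mul hk' hk' (by positivity) hk0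
      nlinarith [Real.sq_sqrt (show (0:ℝ) ≤ 2 by norm_num), sq_abs x, key]
    have h3 : (0:ℝ) < ((k:ℝ)+1)^2 - x^2 := by nlinarith [sq_nonneg x]
    rw [Real.norm_eq_abs, show x ^ 2 - ((k:ℝ) + 1) ^ 2 = -((((k:ℝ)+1)^2 - x^2)) by ring,
      one_div, abs_inv, abs_neg, abs_of_pos h3, ← one_div]
    rw [mul_one_div, div_le_div_iff₀ h3 (by positivity)]
    nlinarith [sq_nonneg x]
  set S := ∑' k : ℕ, (1 : ℝ) / (x ^ 2 - ((k : ℝ) + 1) ^ 2) with hSdef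
  have hS : HasSum (fun k : ℕ => 1 / (x ^ 2 - ((k : ℝ) + 1) ^ 2)) S := hsum.hasSum
  refine ⟨S, hS, ?_⟩
  -- sum over ℤ
  have hZ : HasSum (fun i : ℤ => 1 / (x^2 - (i:ℝ)^2)) ((S + 1/x^2) + S) := by
    have h1 : HasSum (fun k : ℕ => (fun m : ℕ => 1 / (x^2 - ((m:ℕ):ℝ)^2)) (k+1)) S := by
      have e : (fun k : ℕ => (fun m : ℕ => 1 / (x^2 - ((m:ℕ):ℝ)^2)) (k+1))
          = (fun k : ℕ => 1 / (x ^ 2 - ((k : ℝ) + 1) ^ 2)) := by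
        funext k; push_cast; ring
      rw [e]; exact hS
    have h_nat : HasSum (fun k : ℕ => 1 / (x^2 - ((k:ℕ):ℝ)^2)) (S + 1/x^2) := by
      have := (hasSum_nat_add_iff (f := fun k : ℕ => 1 / (x^2 - ((k:ℕ):ℝ)^2)) 1).mp h1
      simpa using this
    have h_nat' : HasSum (fun k : ℕ => (fun i : ℤ => 1 / (x^2 - (i:ℝ)^2)) k) (S + 1/x^2) := by
      have e : (fun k : ℕ => (fun i : ℤ => 1 / (x^2 - (i:ℝ)^2)) k)
          = (fun k : ℕ => 1 / (x^2 - ((k:ℕ):ℝ)^2)) := by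
        funext k; push_cast; ring
      rw [e]; exact h_nat
    have h_neg : HasSum (fun k : ℕ => (fun i : ℤ => 1 / (x^2 - (i:ℝ)^2)) (-(k+1))) S := by
      have e : (fun k : ℕ => (fun i : ℤ => 1 / (x^2 - (i:ℝ)^2)) (-(k+1)))
          = (fun k : ℕ => 1 / (x ^ 2 - ((k : ℝ) + 1) ^ 2)) := by
        funext k; push_cast; ring
      rw [e]; exact hS
    exact h_nat'.of_nat_of_neg_add_one h_neg
  -- Fourier side
  have hfourier := key_hasSum x ((S + 1/x^2) + S) hZ hw hv
  -- complexified real sum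
  have hZC : HasSum
      (fun i : ℤ => ((x * Real.sin (Real.pi*x) / Real.pi * (1 / (x^2 - (i:ℝ)^2)) : ℝ) : ℂ))
      (((x * Real.sin (Real.pi*x) / Real.pi * ((S + 1/x^2) + S) : ℝ) : ℂ)) :=
    Complex.ofRealCLM.hasSum (hZ.mul_left _)
  have hZC' : HasSum
      (fun i : ℤ => ((x * Real.sin (Real.pi*x) / (Real.pi * (x^2 - (i:ℝ)^2)) : ℝ) : ℂ))
      (((x * Real.sin (Real.pi*x) / Real.pi * ((S + 1/x^2) + S) : ℝ) : ℂ)) := by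
    refine hZC.congr_fun fun i => ?_
    rw [mul_one_div, div_div]
  have heq : x * Real.sin (Real.pi*x) / Real.pi * ((S + 1/x^2) + S) = Real.cos (Real.pi*x) :=
    Complex.ofReal_inj.mp (hZC'.unique hfourier)
  rw [Real.cot_eq_cos_div_sin]
  field_simp
  field_simp at heq
  rw [mul_comm x Real.pi] at heq
  linear_combination -heq
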